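/- Let 1 < p < ∞ and let X be a Banach space admitting a sequence of compact operators (K_n) on X satisfying conditions (a)–(c). If inequality (7) holds for X and p, then every contraction T: X → ℓ_p has property (M). -/

import Mathlib

open Filter Topology NormedSpace ENNReal MeasureTheory

noncomputable section

/-- A sequence in `X` is weakly null if it tends to zero in the weak topology,
i.e. `f (xs n) → 0` for every continuous linear functional `f`. -/
def WeaklyNull {X : Type*} [NormedAddCommGroup X] [NormedSpace ℝ X] (xs : ℕ → X) : Prop :=
  ∀ f : StrongDual ℝ X, Tendsto (fun n => f (xs n)) atTop (𝓝 0)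

/-- The annihilator `J^⊥` of a subspace `J` in the continuous dual. -/
def annih {Z : Type*} [NormedAddCommGroup Z] [NormedSpace ℝ Z] (J : Submodule ℝ Z) :
    Submodule ℝ (StrongDual ℝ Z) where
  carrier := {f | ∀ x ∈ J, f x = 0}
  add_mem' := by
    intro f g hf hg x hx
    simp [hf x hx, hg x hx]
  zero_mem' := by intro x hx; rfl
  smul_mem' := by
    intro c f hf x hx
    simp [hf x hx]

/-- `J` is an M-ideal in `Z`: there is a closed subspace `V` of the dual such that
`Z* = J^⊥ ⊕₁ V` (algebraic direct sum with additive norm). -/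
def IsMIdeal {Z : Type*} [NormedAddCommGroup Z] [NormedSpace ℝ Z] (J : Submodule ℝ Z) : Prop :=
  ∃ V : Submodule ℝ (StrongDual ℝ Z), IsClosed (V : Set (StrongDual ℝ Z)) ∧
    (∀ f : StrongDual ℝ Z, ∃ g ∈ annih J, ∃ h ∈ V, f = g + h) ∧
    annih J ⊓ V = ⊥ ∧
    ∀ g ∈ annih J, ∀ h ∈ V, ‖g + h‖ = ‖g‖ + ‖h‖

/-- Conditions (a)–(c) on a sequence of compact operators `K n` on `X`:
(a) `K n x → x` for all `x`; (b) `(K n)* f → f` in norm for every `f ∈ X*`;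
(c) `‖Id − 2 K n‖ → 1`. -/
def ABC {X : Type*} [NormedAddCommGroup X] [NormedSpace ℝ X] (K : ℕ → X →L[ℝ] X) : Prop :=
  (∀ n, IsCompactOperator (K n)) ∧
  (∀ x : X, Tendsto (fun n => (K n) x) atTop (𝓝 x)) ∧
  (∀ f : StrongDual ℝ X, Tendsto (fun n => f.comp (K n)) atTop (𝓝 f)) ∧
  Tendsto (fun n => ‖ContinuousLinearMap.id ℝ X - (2 : ℝ) • K n‖) atTop (𝓝 1)

/-- Inequality (7) for `X` and exponent `p`. -/
def Ineq7 (X : Type*) [NormedAddCommGroup X] [NormedSpace ℝ X] (p : ℝ) : Prop :=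
  ∀ (x : X) (xs : ℕ → X), WeaklyNull xs →
    limsup (fun n => (‖x‖ ^ p + ‖xs n‖ ^ p) ^ (1 / p)) atTop ≤
    limsup (fun n => ((‖x + xs n‖ ^ p + ‖x - xs n‖ ^ p) / 2) ^ (1 / p)) atTop

section PropertyMHelpers

variable {X : Type*} [NormedAddCommGroup X] [NormedSpace ℝ X]

private lemma WeaklyNull.exists_bound' {xs : ℕ → X} (h : WeaklyNull xs) :
    ∃ C : ℝ, 0 ≤ C ∧ ∀ n, ‖xs n‖ ≤ C := by
  obtain ⟨C, hC⟩ := banach_steinhaus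
      (g := fun n => NormedSpace.inclusionInDoubleDual ℝ X (xs n)) (fun f => by
    obtain ⟨C, hC⟩ := (h f).norm.bddAbove_range
    exact ⟨C, fun n => hC (Set.mem_range_self n)⟩)
  refine ⟨max C 0, le_max_right _ _, fun n => ?_⟩
  have he : ‖xs n‖ = ‖NormedSpace.inclusionInDoubleDual ℝ X (xs n)‖ :=
    ((NormedSpace.inclusionInDoubleDualLi ℝ (E := X)).norm_map (xs n)).symm
  rw [he]
  exact (hC n).trans (le_max_left _ _)

private lemma IsCompactOperator.tendsto_weaklyNull' {K : X →L[ℝ] X} (hK : IsCompactOperator K)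
    {xs : ℕ → X} (h : WeaklyNull xs) : Tendsto (fun n => K (xs n)) atTop (𝓝 0) := by
  obtain ⟨C, hC0, hC⟩ := h.exists_bound'
  obtain ⟨M, hMc, hMn⟩ := hK
  obtain ⟨r, hr, hball⟩ := Metric.mem_nhds_iff.mp hMn
  set c : ℝ := r / (2 * (C + 1)) with hc
  have hcpos : 0 < c := by positivity
  have hcr : c * (2 * (C + 1)) = r := div_mul_cancel₀ r (by positivity)
  have hmem : ∀ n, K (c • xs n) ∈ M := by
    intro n
    apply hball
    rw [Metric.mem_ball, dist_zero_right, norm_smul, Real.norm_eq_abs, abs_of_pos hcpos]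
    nlinarith [hC n, norm_nonneg (xs n)]
  apply tendsto_of_subseq_tendsto
  intro ns hns
  obtain ⟨a, -, φ, hφ, hφt⟩ := hMc.isSeqCompact (x := fun k => K (c • xs (ns k))) (fun k => hmem _)
  have ha : a = 0 := by
    apply eq_zero_of_forall_dual_eq_zero ℝ
    intro f
    have h1 : Tendsto (fun k => f (K (c • xs (ns (φ k))))) atTop (𝓝 (f a)) :=
      (f.continuous.tendsto a).comp hφt
    have h2 : Tendsto (fun k => f (K (c • xs (ns (φ k))))) atTop (𝓝 0) := by
      have h3 := (h (f.comp K)).comp (hns.comp hφ.tendsto_atTop)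
      have heq : (fun k => f (K (c • xs (ns (φ k)))))
          = fun k => c * (f.comp K) (xs (ns (φ k))) := by
        funext k
        simp [_root_.map_smul, smul_eq_mul]
      rw [heq]
      simpa using h3.const_mul c
    exact tendsto_nhds_unique h1 h2
  refine ⟨φ, ?_⟩
  have heq2 : (fun k => K (xs (ns (φ k)))) = fun k => c⁻¹ • K (c • xs (ns (φ k))) := by
    funext k
    rw [_root_.map_smul, smul_smul, inv_mul_cancel₀ hcpos.ne', one_smul]
  rw [heq2]
  rw [ha] at hφt
  simpa using hφt.const_smul c⁻¹

private lemma cob' (u : ℕ → ℝ) (hu : ∀ n, 0 ≤ u n) :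
    Filter.IsCoboundedUnder (· ≤ ·) atTop u :=
  Filter.isCoboundedUnder_le_of_eventually_le atTop (Filter.Eventually.of_forall hu)

private lemma bddOf' {u : ℕ → ℝ} {C : ℝ} (hu : ∀ n, u n ≤ C) :
    Filter.IsBoundedUnder (· ≤ ·) atTop u :=
  Filter.isBoundedUnder_of ⟨C, hu⟩

private lemma rpow_rpow_inv'' {q a : ℝ} (hq : 0 < q) (ha : 0 ≤ a) : (a ^ q) ^ (1/q) = a := by
  rw [← Real.rpow_mul ha, mul_one_div_cancel hq.ne', Real.rpow_one]

private lemma lp_upper (p : ℝ≥0∞) [Fact (1 ≤ p)] (hq0 : 0 < p.toReal)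
    (y : lp (fun _ : ℕ => ℝ) p) (z : ℕ → lp (fun _ : ℕ => ℝ) p)
    (hcoord : ∀ i : ℕ, Tendsto (fun n => z n i) atTop (𝓝 0))
    {D : ℝ} (hD : ∀ n, ‖z n‖ ≤ D) :
    limsup (fun n => ‖y + z n‖) atTop ≤
      (‖y‖ ^ p.toReal + (limsup (fun n => ‖z n‖) atTop) ^ p.toReal) ^ (1 / p.toReal) := by
  set q := p.toReal with hq
  set L := limsup (fun n => ‖z n‖) atTop with hLdef
  have hbddz : Filter.IsBoundedUnder (· ≤ ·) atTop (fun n => ‖z n‖) := bddOf' hD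
  have hL0 : 0 ≤ L :=
    le_limsup_of_frequently_le (Frequently.of_forall fun n => norm_nonneg _) hbddz
  have key : ∀ ε : ℝ, 0 < ε →
      limsup (fun n => ‖y + z n‖) atTop ≤ (‖y‖ ^ q + ε + (L + ε) ^ q) ^ (1/q) + ε := by
    intro ε hε
    have hsumy := lp.hasSum_norm hq0 y
    obtain ⟨s, hs⟩ : ∃ s : Finset ℕ, ‖y‖ ^ q - ∑ i ∈ s, ‖y i‖ ^ q < ε ^ q := by
      have := (Metric.tendsto_nhds.mp hsumy) (ε ^ q) (Real.rpow_pos_of_pos hε q)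
      obtain ⟨s, hs⟩ := this.exists
      refine ⟨s, ?_⟩
      rw [Real.dist_eq, abs_lt] at hs
      linarith [hs.1]
    set u : lp (fun _ : ℕ => ℝ) p := ∑ i ∈ s, lp.single p i (y i) with hu
    have hyu : ‖y - u‖ ≤ ε := by
      have h1 : ‖y - u‖ ^ q = ‖y‖ ^ q - ∑ i ∈ s, ‖y i‖ ^ q :=
        lp.norm_compl_sum_single hq0 y s
      have h2 : ‖y - u‖ ^ q < ε ^ q := by rw [h1]; exact hs
      by_contra hcon
      push_neg at hcon
      exact absurd ((Real.rpow_lt_rpow_iff (norm_nonneg _) hε.le hq0).mp h2) (not_lt.mpr hcon.le)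
    have hu_apply : ∀ j, u j = if j ∈ s then y j else 0 := by
      intro j
      have h1 : u j = ∑ i ∈ s, (lp.single p i (y i) : lp (fun _ : ℕ => ℝ) p) j := by
        rw [hu, lp.coeFn_sum, Finset.sum_apply]
      rw [h1]
      simp only [lp.single_apply, eq_rec_constant]
      simp [Finset.sum_dite_eq, Finset.sum_dite_eq']
    have hfin : Tendsto (fun n => ∑ i ∈ s, ‖y i + z n i‖ ^ q) atTop
        (𝓝 (∑ i ∈ s, ‖y i‖ ^ q)) := by
      apply tendsto_finset_sum
      intro i _
      have h1 : Tendsto (fun n => y i + z n i) atTop (𝓝 (y i)) := by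
        simpa using tendsto_const_nhds.add (hcoord i)
      have h2 : Tendsto (fun n => ‖y i + z n i‖) atTop (𝓝 (‖y i‖)) := h1.norm
      exact ((Real.continuousAt_rpow_const _ q (Or.inr hq0.le)).tendsto.comp h2 :)
    have hev1 : ∀ᶠ n in atTop, ∑ i ∈ s, ‖y i + z n i‖ ^ q < ∑ i ∈ s, ‖y i‖ ^ q + ε :=
      hfin.eventually_lt_const (lt_add_of_pos_right _ hε)
    have hev2 : ∀ᶠ n in atTop, ‖z n‖ < L + ε :=
      eventually_lt_of_limsup_lt (lt_add_of_pos_right _ hε) hbddz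
    have hsums : ∑ i ∈ s, ‖y i‖ ^ q ≤ ‖y‖ ^ q :=
      sum_le_hasSum s (fun i _ => Real.rpow_nonneg (norm_nonneg _) q) hsumy
    apply limsup_le_of_le (cob' _ fun n => norm_nonneg _)
    filter_upwards [hev1, hev2] with n h1 h2
    have hsplit : ‖u + z n‖ ^ q ≤ (∑ i ∈ s, ‖y i + z n i‖ ^ q) + ‖z n‖ ^ q := by
      have hsumm : Summable (fun i => ‖(u + z n) i‖ ^ q) := (lp.memℓp (u + z n)).summable hq0
      have hsummz : Summable (fun i => ‖z n i‖ ^ q) := (lp.memℓp (z n)).summable hq0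
      set S : Set ℕ := (↑s : Set ℕ) with hS
      have hid1 := hsumm.tsum_subtype_add_tsum_subtype_compl S
      have hid2 := hsummz.tsum_subtype_add_tsum_subtype_compl S
      have hzn : ‖z n‖ ^ q = ∑' i, ‖z n i‖ ^ q := lp.norm_rpow_eq_tsum hq0 (z n)
      have huzn : ‖u + z n‖ ^ q = ∑' i, ‖(u + z n) i‖ ^ q := lp.norm_rpow_eq_tsum hq0 (u + z n)
      have hA : ∑' (i : S), ‖(u + z n) (i : ℕ)‖ ^ q
          = ∑ i ∈ s, ‖y i + z n i‖ ^ q := by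
        rw [← Finset.tsum_subtype s (fun i => ‖y i + z n i‖ ^ q)]
        apply tsum_congr
        rintro ⟨i, hi⟩
        have hi' : i ∈ s := hi
        have h5 : (u + z n) i = y i + z n i := by
          rw [lp.coeFn_add, Pi.add_apply, hu_apply i, if_pos hi']
        rw [h5]
      have hB : ∑' (i : ↥Sᶜ), ‖(u + z n) (i : ℕ)‖ ^ q
          = ∑' (i : ↥Sᶜ), ‖z n (i : ℕ)‖ ^ q := by
        apply tsum_congr
        rintro ⟨i, hi⟩
        have hi' : i ∉ s := hi
        have h5 : (u + z n) i = z n i := by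
          rw [lp.coeFn_add, Pi.add_apply, hu_apply i, if_neg hi', zero_add]
        rw [h5]
      have hC : 0 ≤ ∑' (i : S), ‖z n (i : ℕ)‖ ^ q :=
        tsum_nonneg fun i => Real.rpow_nonneg (norm_nonneg _) q
      rw [huzn, ← hid1, hA, hB]
      rw [hzn, ← hid2]
      linarith
    have hzq : ‖z n‖ ^ q ≤ (L + ε) ^ q := Real.rpow_le_rpow (norm_nonneg _) h2.le hq0.le
    have hstep : ‖u + z n‖ ^ q ≤ ‖y‖ ^ q + ε + (L + ε) ^ q := by linarith
    have hun : ‖u + z n‖ ≤ (‖y‖ ^ q + ε + (L + ε) ^ q) ^ (1/q) := by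
      rw [← rpow_rpow_inv'' hq0 (norm_nonneg (u + z n))]
      exact Real.rpow_le_rpow (Real.rpow_nonneg (norm_nonneg _) q) hstep
        (by positivity)
    have htri : ‖y + z n‖ ≤ ‖u + z n‖ + ‖y - u‖ := by
      have h6 : y + z n = (u + z n) + (y - u) := by abel
      rw [h6]
      exact norm_add_le _ _
    linarith
  have hcont : Tendsto (fun ε : ℝ => (‖y‖ ^ q + ε + (L + ε) ^ q) ^ (1/q) + ε)
      (𝓝[>] (0:ℝ)) (𝓝 ((‖y‖ ^ q + L ^ q) ^ (1/q))) := by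
    have c1 : ContinuousAt (fun ε : ℝ => ‖y‖ ^ q + ε + (L + ε) ^ q) 0 := by
      apply ContinuousAt.add
      · exact (continuous_const.add continuous_id).continuousAt
      · exact (Real.continuousAt_rpow_const _ q (Or.inr hq0.le)).comp
          ((continuous_const.add continuous_id).continuousAt)
    have c2 : ContinuousAt (fun t : ℝ => t ^ (1/q)) (‖y‖ ^ q + 0 + (L + 0) ^ q) :=
      Real.continuousAt_rpow_const _ _ (Or.inr (by positivity))
    have c3 : ContinuousAt (fun ε : ℝ => (‖y‖ ^ q + ε + (L + ε) ^ q) ^ (1/q)) 0 :=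
      ContinuousAt.comp (g := fun t : ℝ => t ^ (1/q))
        (f := fun ε : ℝ => ‖y‖ ^ q + ε + (L + ε) ^ q) c2 c1
    have c4 : ContinuousAt (fun ε : ℝ => (‖y‖ ^ q + ε + (L + ε) ^ q) ^ (1/q) + ε) 0 :=
      c3.add continuous_id.continuousAt
    have := c4.tendsto
    simp only [add_zero] at this
    exact this.mono_left nhdsWithin_le_nhds
  exact ge_of_tendsto hcont (eventually_nhdsWithin_of_forall fun ε hε => key ε hε)

end PropertyMHelpers

/-- If `X` admits compact operators satisfying (a)–(c) and inequality (7) holds for `X` and `p`,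
then every contraction `T : X → ℓ_p` has property (M). -/
theorem propertyM_of_ineq7 (p : ℝ≥0∞) [Fact (1 ≤ p)] (hp : 1 < p) (hp' : p ≠ ∞)
    (X : Type*) [NormedAddCommGroup X] [NormedSpace ℝ X] [CompleteSpace X]
    (K : ℕ → X →L[ℝ] X) (hK : ABC K) (h7 : Ineq7 X p.toReal)
    (T : X →L[ℝ] lp (fun _ : ℕ => ℝ) p) (hT : ‖T‖ ≤ 1) :
    ∀ (x : X) (y : lp (fun _ : ℕ => ℝ) p) (xs : ℕ → X), ‖y‖ ≤ ‖x‖ → WeaklyNull xs →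
      limsup (fun n => ‖y + T (xs n)‖) atTop ≤ limsup (fun n => ‖x + xs n‖) atTop := by
  intro x y xs hyx hxs
  obtain ⟨hK1, hK2, -, hK4⟩ := hK
  obtain ⟨C, hC0, hC⟩ := hxs.exists_bound'
  have hq0 : 0 < p.toReal := ENNReal.toReal_pos (zero_lt_one.trans hp).ne' hp'
  set q := p.toReal with hqdef
  set A := limsup (fun n => ‖x + xs n‖) atTop with hAdef
  set L := limsup (fun n => ‖xs n‖) atTop with hLdef
  -- boundedness facts
  have bddns : Filter.IsBoundedUnder (· ≤ ·) atTop (fun n => ‖xs n‖) := bddOf' hC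
  have bddA : Filter.IsBoundedUnder (· ≤ ·) atTop (fun n => ‖x + xs n‖) :=
    bddOf' (C := ‖x‖ + C) fun n => (norm_add_le _ _).trans (by linarith [hC n])
  have bddSub : Filter.IsBoundedUnder (· ≤ ·) atTop (fun n => ‖x - xs n‖) :=
    bddOf' (C := ‖x‖ + C) fun n => (norm_sub_le _ _).trans (by linarith [hC n])
  have hA0 : 0 ≤ A :=
    le_limsup_of_frequently_le (Frequently.of_forall fun n => norm_nonneg _) bddA
  have hL0 : 0 ≤ L :=
    le_limsup_of_frequently_le (Frequently.of_forall fun n => norm_nonneg _) bddns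
  have hLC : L ≤ C := limsup_le_of_le (cob' _ fun n => norm_nonneg _)
    (Eventually.of_forall hC)
  -- Step 1: symmetry, limsup ‖x - xs n‖ ≤ A
  have hsym : limsup (fun n => ‖x - xs n‖) atTop ≤ A := by
    have key : ∀ η : ℝ, 0 < η →
        limsup (fun n => ‖x - xs n‖) atTop ≤ (1 + η) * (A + η) + 2 * η := by
      intro η hη
      obtain ⟨m, hm1, hm2⟩ : ∃ m, ‖ContinuousLinearMap.id ℝ X - (2:ℝ) • K m‖ < 1 + η ∧
          ‖x - K m x‖ < η / 2 := by
        have e1 := hK4.eventually_lt_const (show (1:ℝ) < 1 + η by linarith)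
        have e2 : ∀ᶠ m in atTop, ‖x - K m x‖ < η / 2 := by
          have h0 : Tendsto (fun m => ‖x - K m x‖) atTop (𝓝 0) := by
            have := (tendsto_const_nhds (x := x) (f := atTop)).sub (hK2 x)
            simpa using this.norm
          exact h0.eventually_lt_const (by positivity)
        exact (e1.and e2).exists
      have e3 : ∀ᶠ n in atTop, ‖K m (xs n)‖ < η / 2 := by
        have h0 := ((hK1 m).tendsto_weaklyNull' hxs).norm
        simp only [norm_zero] at h0
        exact h0.eventually_lt_const (by positivity)
      have e4 : ∀ᶠ n in atTop, ‖x + xs n‖ < A + η :=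
        eventually_lt_of_limsup_lt (lt_add_of_pos_right _ hη) bddA
      apply limsup_le_of_le (cob' _ fun n => norm_nonneg _)
      filter_upwards [e3, e4] with n h3 h4
      set Dm := ContinuousLinearMap.id ℝ X - (2:ℝ) • K m with hDm
      have hxsub : x - xs n =
          -(Dm (x + xs n)) + ((2:ℝ) • (x - K m x) - (2:ℝ) • K m (xs n)) := by
        have hDmApp : Dm (x + xs n) = (x + xs n) - (2:ℝ) • (K m x + K m (xs n)) := by
          simp only [hDm, ContinuousLinearMap.sub_apply, ContinuousLinearMap.coe_id', id_eq,
            ContinuousLinearMap.smul_apply, map_add, smul_add]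
          abel
        rw [hDmApp]
        module
      have t1 := norm_add_le (-(Dm (x + xs n))) ((2:ℝ) • (x - K m x) - (2:ℝ) • K m (xs n))
      have t2 := norm_sub_le ((2:ℝ) • (x - K m x)) ((2:ℝ) • K m (xs n))
      rw [norm_neg] at t1
      have t3 : ‖(2:ℝ) • (x - K m x)‖ = 2 * ‖x - K m x‖ := by
        rw [norm_smul]; simp
      have t4 : ‖(2:ℝ) • K m (xs n)‖ = 2 * ‖K m (xs n)‖ := by
        rw [norm_smul]; simp
      have t5 : ‖Dm (x + xs n)‖ ≤ (1 + η) * (A + η) := by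
        refine (Dm.le_opNorm (x + xs n)).trans ?_
        exact mul_le_mul hm1.le h4.le (norm_nonneg _) (by linarith)
      rw [hxsub]
      calc ‖-(Dm (x + xs n)) + ((2:ℝ) • (x - K m x) - (2:ℝ) • K m (xs n))‖
          ≤ ‖Dm (x + xs n)‖ + ‖(2:ℝ) • (x - K m x) - (2:ℝ) • K m (xs n)‖ := t1
        _ ≤ ‖Dm (x + xs n)‖ + (2 * ‖x - K m x‖ + 2 * ‖K m (xs n)‖) := by
            rw [← t3, ← t4]; linarith
        _ ≤ (1 + η) * (A + η) + 2 * η := by linarith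
    have hcont : Tendsto (fun η : ℝ => (1 + η) * (A + η) + 2 * η) (𝓝[>] (0:ℝ)) (𝓝 A) := by
      have h0 : Tendsto (fun η : ℝ => (1 + η) * (A + η) + 2 * η) (𝓝 0)
          (𝓝 ((1 + 0) * (A + 0) + 2 * 0)) := by
        exact Continuous.tendsto (((continuous_const.add continuous_id).mul
          (continuous_const.add continuous_id)).add
          (continuous_const.mul continuous_id)) 0
      simp only [add_zero, mul_zero, one_mul] at h0
      exact h0.mono_left nhdsWithin_le_nhds
    exact ge_of_tendsto hcont (eventually_nhdsWithin_of_forall fun η hη => key η hη)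
  -- Step 2: (‖x‖^q + L^q)^(1/q) ≤ A
  have h2 : (‖x‖ ^ q + L ^ q) ^ (1/q) ≤ A := by
    have hRHS : limsup (fun n => ((‖x + xs n‖ ^ q + ‖x - xs n‖ ^ q) / 2) ^ (1/q)) atTop ≤ A := by
      apply _root_.le_of_forall_pos_le_add
      intro ε hε
      have he1 : ∀ᶠ n in atTop, ‖x + xs n‖ < A + ε :=
        eventually_lt_of_limsup_lt (lt_add_of_pos_right _ hε) bddA
      have he2 : ∀ᶠ n in atTop, ‖x - xs n‖ < A + ε :=
        eventually_lt_of_limsup_lt (lt_of_le_of_lt hsym (lt_add_of_pos_right _ hε)) bddSub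
      apply limsup_le_of_le (cob' _ fun n => Real.rpow_nonneg (by positivity) _)
      filter_upwards [he1, he2] with n h1' h2'
      have r1 : ‖x + xs n‖ ^ q ≤ (A + ε) ^ q :=
        Real.rpow_le_rpow (norm_nonneg _) h1'.le hq0.le
      have r2 : ‖x - xs n‖ ^ q ≤ (A + ε) ^ q :=
        Real.rpow_le_rpow (norm_nonneg _) h2'.le hq0.le
      calc ((‖x + xs n‖ ^ q + ‖x - xs n‖ ^ q) / 2) ^ (1/q)
          ≤ ((A + ε) ^ q) ^ (1/q) := by
            apply Real.rpow_le_rpow (by positivity) (by linarith) (by positivity)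
        _ = A + ε := rpow_rpow_inv'' hq0 (by linarith)
    have hLHSb : Filter.IsBoundedUnder (· ≤ ·) atTop
        (fun n => (‖x‖ ^ q + ‖xs n‖ ^ q) ^ (1/q)) := by
      refine bddOf' (C := (‖x‖ ^ q + C ^ q) ^ (1/q)) fun n => ?_
      apply Real.rpow_le_rpow (by positivity) ?_ (by positivity)
      have := Real.rpow_le_rpow (norm_nonneg (xs n)) (hC n) hq0.le
      linarith
    have key2 : ∀ ε : ℝ, 0 < ε → (‖x‖ ^ q + (max (L - ε) 0) ^ q) ^ (1/q) ≤ A := by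
      intro ε hε
      set t := max (L - ε) 0 with ht
      have ht0 : 0 ≤ t := le_max_right _ _
      have hfreq : ∃ᶠ n in atTop, t ≤ ‖xs n‖ := by
        rcases le_or_gt (L - ε) 0 with h | h
        · have htz : t = 0 := max_eq_right h
          exact Frequently.of_forall fun n => htz ▸ norm_nonneg _
        · have htt : t = L - ε := max_eq_left h.le
          have hlt : t < L := by rw [htt]; linarith
          exact (frequently_lt_of_lt_limsup (cob' _ fun n => norm_nonneg _) hlt).mono
            fun n hn => hn.le
      have hle : (‖x‖ ^ q + t ^ q) ^ (1/q)
          ≤ limsup (fun n => (‖x‖ ^ q + ‖xs n‖ ^ q) ^ (1/q)) atTop := by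
        refine le_limsup_of_frequently_le (hfreq.mono fun n hn => ?_) hLHSb
        apply Real.rpow_le_rpow (by positivity) ?_ (by positivity)
        have := Real.rpow_le_rpow ht0 hn hq0.le
        linarith
      exact hle.trans ((h7 x xs hxs).trans hRHS)
    have hcont2 : Tendsto (fun ε : ℝ => (‖x‖ ^ q + (max (L - ε) 0) ^ q) ^ (1/q))
        (𝓝[>] (0:ℝ)) (𝓝 ((‖x‖ ^ q + L ^ q) ^ (1/q))) := by
      have c1 : ContinuousAt (fun ε : ℝ => max (L - ε) 0) 0 :=
        ((continuous_const.sub continuous_id).max continuous_const).continuousAt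
      have c2 : ContinuousAt (fun t : ℝ => ‖x‖ ^ q + t ^ q) (max (L - 0) 0) :=
        continuousAt_const.add (Real.continuousAt_rpow_const _ q (Or.inr hq0.le))
      have c3 : ContinuousAt (fun t : ℝ => t ^ (1/q)) (‖x‖ ^ q + (max (L - 0) 0) ^ q) :=
        Real.continuousAt_rpow_const _ _ (Or.inr (by positivity))
      have c4 : ContinuousAt (fun ε : ℝ => (‖x‖ ^ q + (max (L - ε) 0) ^ q) ^ (1/q)) 0 :=
        ContinuousAt.comp (g := fun t : ℝ => t ^ (1/q))
          (f := fun ε : ℝ => ‖x‖ ^ q + (max (L - ε) 0) ^ q) c3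
          (ContinuousAt.comp (g := fun t : ℝ => ‖x‖ ^ q + t ^ q)
            (f := fun ε : ℝ => max (L - ε) 0) c2 c1)
      have := c4.tendsto
      rw [show max (L - 0) 0 = L by rw [sub_zero]; exact max_eq_left hL0] at this
      exact this.mono_left nhdsWithin_le_nhds
    exact le_of_tendsto hcont2 (eventually_nhdsWithin_of_forall fun ε hε => key2 ε hε)
  -- Step 3: the ℓp upper estimate
  have hTle : ∀ n, ‖T (xs n)‖ ≤ ‖xs n‖ := by
    intro n
    have := T.le_of_opNorm_le hT (xs n)
    simpa using this
  have hcoordT : ∀ i : ℕ, Tendsto (fun n => T (xs n) i) atTop (𝓝 0) := by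
    intro i
    have hp0' : p ≠ 0 := (zero_lt_one.trans hp).ne'
    let e : lp (fun _ : ℕ => ℝ) p →L[ℝ] ℝ :=
      LinearMap.mkContinuous
        { toFun := fun f => f i
          map_add' := fun f g => rfl
          map_smul' := fun c f => rfl }
        1 (fun f => by rw [one_mul]; exact lp.norm_apply_le_norm hp0' f i)
    exact hxs (e.comp T)
  have hup := lp_upper p hq0 y (fun n => T (xs n)) hcoordT (D := C)
    (fun n => (hTle n).trans (hC n))
  set LT := limsup (fun n => ‖T (xs n)‖) atTop with hLT
  have bddT : Filter.IsBoundedUnder (· ≤ ·) atTop (fun n => ‖T (xs n)‖) :=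
    bddOf' fun n => (hTle n).trans (hC n)
  have hLT0 : 0 ≤ LT :=
    le_limsup_of_frequently_le (Frequently.of_forall fun n => norm_nonneg _) bddT
  have hLTle : LT ≤ L :=
    limsup_le_limsup (Eventually.of_forall fun n => hTle n)
      (cob' _ fun n => norm_nonneg _) bddns
  have hmono : (‖y‖ ^ q + LT ^ q) ^ (1/q) ≤ (‖x‖ ^ q + L ^ q) ^ (1/q) := by
    apply Real.rpow_le_rpow (by positivity) ?_ (by positivity)
    have m1 : ‖y‖ ^ q ≤ ‖x‖ ^ q := Real.rpow_le_rpow (norm_nonneg _) hyx hq0.le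
    have m2 : LT ^ q ≤ L ^ q := Real.rpow_le_rpow hLT0 hLTle hq0.le
    linarith
  exact hup.trans (hmono.trans h2)
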